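/- Let A ∈ 𝔸 and B ∈ 𝔹, and suppose that the matrices M_1, …, M_C all have full column rank, where M_1 = [A_2ᵀ ⋯ A_Cᵀ]ᵀ (the matrix A with the rows belonging to channel 1 deleted) and, for c = 2, …, C, M_c is the block matrix [[A_{<c}, B_{<c}], [A_{>c}, 0]] with A_{<c} = [A_1ᵀ ⋯ A_{c−1}ᵀ]ᵀ the rows of A in channels 1,…,c−1, A_{>c} = [A_{c+1}ᵀ ⋯ A_Cᵀ]ᵀ the rows of A in channels c+1,…,C, and B_{<c} = blkdiag(B_1, …, B_{c−1}). Then every orthogonal matrix Q ∈ O(r_0 + r) such that [A B]Q = [Ã B̃] for some Ã ∈ 𝔸 and B̃ ∈ 𝔹 is block diagonal: writing Q in blocks Q_{ij} of size r_i × r_j for 0 ≤ i, j ≤ C (index 0 corresponding to the first r_0 rows/columns, index c to the next r_c), one has Q_{ij} = 0 for all i ≠ j. -/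

import Mathlib

open Matrix

/-- The matrix `M_c` of Proposition 1: the rows of `[A B]` belonging to all channels other
than `c`, keeping the common-factor columns and the distinct-factor columns of the channels
preceding `c`.  (Since `blockDiagonal' B` vanishes on rows of channels `> c` at columns of
channels `< c`, this agrees with `[[A_{<c}, B_{<c}], [A_{>c}, 0]]`, and for the first channel
it is `[A₂ᵀ ⋯ A_Cᵀ]ᵀ`.) -/
def Mmat {C : ℕ} (n r : Fin C → ℕ) (r0 : ℕ)
    (A : Matrix ((c : Fin C) × Fin (n c)) (Fin r0) ℝ)
    (B : ∀ c, Matrix (Fin (n c)) (Fin (r c)) ℝ) (c : Fin C) :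
    Matrix {i : (c' : Fin C) × Fin (n c') // i.1 ≠ c}
      (Fin r0 ⊕ {j : (c' : Fin C) × Fin (r c') // j.1 < c}) ℝ :=
  Matrix.of fun i k =>
    Sum.elim (fun k0 => A i.1 k0) (fun j => Matrix.blockDiagonal' B i.1 j.1) k

/-- A matrix has full column rank iff its rank equals the number of columns. -/
def FCR {m l : Type*} [Fintype m] [Fintype l] (M : Matrix m l ℝ) : Prop :=
  M.rank = Fintype.card l

/-- **Proposition 1.** If the matrices `M₁, …, M_C` all have full column rank, then every
orthogonal matrix `Q` with `[A B] Q = [Ã B̃]` for some `Ã ∈ 𝔸`, `B̃ ∈ 𝔹` is block diagonal. -/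
lemma aux_fcr {m l : Type*} [Fintype m] [Fintype l] (M : Matrix m l ℝ)
    (h : FCR M) {v : l → ℝ} (hv : M.mulVec v = 0) : v = 0 := by
  have hker : LinearMap.ker M.mulVecLin = ⊥ := by
    have h1 := LinearMap.finrank_range_add_finrank_ker M.mulVecLin
    rw [Module.finrank_fintype_fun_eq_card] at h1
    have h2 : Module.finrank ℝ (LinearMap.range M.mulVecLin) = Fintype.card l := h
    rw [h2] at h1
    have h3 : Module.finrank ℝ (LinearMap.ker M.mulVecLin) = 0 := by omega
    exact Submodule.finrank_eq_zero.mp h3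
  have : v ∈ LinearMap.ker M.mulVecLin := by
    simpa [Matrix.mulVecLin_apply] using hv
  simpa [hker] using this

lemma aux_orthsq {k : Type*} [Fintype k] [DecidableEq k] (N : Matrix k k ℝ)
    (h : Nᵀ * N = 1) {w : k → ℝ} (hw : Nᵀ.mulVec w = 0) : w = 0 := by
  have h2 : N * Nᵀ = 1 := mul_eq_one_comm.mp h
  calc w = (N * Nᵀ).mulVec w := by rw [h2, Matrix.one_mulVec]
    _ = N.mulVec (Nᵀ.mulVec w) := by rw [Matrix.mulVec_mulVec]
    _ = 0 := by rw [hw, Matrix.mulVec_zero]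

section main
variable {C : ℕ} {r : Fin C → ℕ} {r0 : ℕ}

-- sum reduction over the big index type
lemma sumred (c : Fin C) (f : (Fin r0 ⊕ ((c' : Fin C) × Fin (r c'))) → ℝ)
    (h1 : ∀ k, f (Sum.inl k) = 0)
    (h2 : ∀ j : (c' : Fin C) × Fin (r c'), j.1 ≠ c → f (Sum.inr j) = 0) :
    ∑ i, f i = ∑ x : Fin (r c), f (Sum.inr ⟨c, x⟩) := by
  rw [Fintype.sum_sum_type]
  rw [Finset.sum_eq_zero (fun k _ => h1 k), zero_add]
  rw [← Finset.univ_sigma_univ, Finset.sum_sigma]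
  refine Finset.sum_eq_single_of_mem c (Finset.mem_univ c) ?_
  intro c' _ hc'
  exact Finset.sum_eq_zero fun x _ => h2 ⟨c', x⟩ hc'

end main

section orth
variable {C : ℕ} {n r : Fin C → ℕ} {r0 : ℕ}

lemma aux_orth (Q : Matrix (Fin r0 ⊕ ((c : Fin C) × Fin (r c)))
      (Fin r0 ⊕ ((c : Fin C) × Fin (r c))) ℝ)
    (hQ : Qᵀ * Q = 1) (c : Fin C)
    (hsupp : ∀ x : Fin (r c),
      (∀ k : Fin r0, Q (Sum.inl k) (Sum.inr ⟨c, x⟩) = 0) ∧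
      (∀ j : (c' : Fin C) × Fin (r c'), j.1 ≠ c → Q (Sum.inr j) (Sum.inr ⟨c, x⟩) = 0))
    (t : Fin r0 ⊕ ((c' : Fin C) × Fin (r c')))
    (ht : ∀ a : Fin (r c), t ≠ Sum.inr ⟨c, a⟩) (x : Fin (r c)) :
    Q (Sum.inr ⟨c, x⟩) t = 0 := by
  set N : Matrix (Fin (r c)) (Fin (r c)) ℝ :=
    Matrix.of fun a b => Q (Sum.inr ⟨c, a⟩) (Sum.inr ⟨c, b⟩) with hNdef
  have hentry : ∀ a b : Fin r0 ⊕ ((c' : Fin C) × Fin (r c')),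
      (Qᵀ * Q) a b = ∑ i, Q i a * Q i b := by
    intro a b
    rw [Matrix.mul_apply]
    simp [Matrix.transpose_apply]
  have hN : Nᵀ * N = 1 := by
    ext a b
    have h1 := congrFun (congrFun hQ (Sum.inr ⟨c, a⟩)) (Sum.inr ⟨c, b⟩)
    rw [hentry] at h1
    rw [sumred c (fun i => Q i (Sum.inr ⟨c, a⟩) * Q i (Sum.inr ⟨c, b⟩))
      (fun k => mul_eq_zero_of_left ((hsupp a).1 k) _)
      (fun j hj => mul_eq_zero_of_left ((hsupp a).2 j hj) _)] at h1
    rw [Matrix.mul_apply, Matrix.one_apply]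
    have : (1 : Matrix (Fin r0 ⊕ ((c' : Fin C) × Fin (r c')))
        (Fin r0 ⊕ ((c' : Fin C) × Fin (r c'))) ℝ) (Sum.inr ⟨c, a⟩) (Sum.inr ⟨c, b⟩)
        = if a = b then (1:ℝ) else 0 := by
      rw [Matrix.one_apply]
      simp [Sigma.mk.inj_iff]
    rw [this] at h1
    rw [← h1]
    simp [hNdef, Matrix.transpose_apply]
  have hw : Nᵀ.mulVec (fun y => Q (Sum.inr ⟨c, y⟩) t) = 0 := by
    funext a
    have h1 := congrFun (congrFun hQ (Sum.inr ⟨c, a⟩)) t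
    rw [hentry] at h1
    rw [sumred c (fun i => Q i (Sum.inr ⟨c, a⟩) * Q i t)
      (fun k => mul_eq_zero_of_left ((hsupp a).1 k) _)
      (fun j hj => mul_eq_zero_of_left ((hsupp a).2 j hj) _)] at h1
    have hz : (1 : Matrix (Fin r0 ⊕ ((c' : Fin C) × Fin (r c')))
        (Fin r0 ⊕ ((c' : Fin C) × Fin (r c'))) ℝ) (Sum.inr ⟨c, a⟩) t = 0 := by
      rw [Matrix.one_apply]
      exact if_neg (fun h => ht a h.symm)
    rw [hz] at h1
    show ∑ y, Nᵀ a y * Q (Sum.inr ⟨c, y⟩) t = (0 : ℝ)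
    calc ∑ y, Nᵀ a y * Q (Sum.inr ⟨c, y⟩) t
        = ∑ y, Q (Sum.inr ⟨c, y⟩) (Sum.inr ⟨c, a⟩) * Q (Sum.inr ⟨c, y⟩) t := by
          simp [hNdef, Matrix.transpose_apply]
      _ = 0 := h1
  exact congrFun (aux_orthsq N hN hw) x

end orth

theorem orthogonal_preserving_blockdiag {C : ℕ} (n r : Fin C → ℕ) (r0 : ℕ)
    (A : Matrix ((c : Fin C) × Fin (n c)) (Fin r0) ℝ)
    (B : ∀ c, Matrix (Fin (n c)) (Fin (r c)) ℝ)
    (hFCR : ∀ c : Fin C, FCR (Mmat n r r0 A B c))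
    (Q : Matrix (Fin r0 ⊕ ((c : Fin C) × Fin (r c)))
                (Fin r0 ⊕ ((c : Fin C) × Fin (r c))) ℝ)
    (hQ : Qᵀ * Q = 1)
    (Atil : Matrix ((c : Fin C) × Fin (n c)) (Fin r0) ℝ)
    (Btil : ∀ c, Matrix (Fin (n c)) (Fin (r c)) ℝ)
    (hEq : Matrix.fromCols A (Matrix.blockDiagonal' B) * Q
        = Matrix.fromCols Atil (Matrix.blockDiagonal' Btil)) :
    (∀ (k : Fin r0) (j : (c : Fin C) × Fin (r c)),
        Q (Sum.inl k) (Sum.inr j) = 0 ∧ Q (Sum.inr j) (Sum.inl k) = 0) ∧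
    (∀ j j' : (c : Fin C) × Fin (r c), j.1 ≠ j'.1 → Q (Sum.inr j) (Sum.inr j') = 0) := by
  classical
  have key : ∀ (m : ℕ) (c : Fin C), C - c.val ≤ m → ∀ x : Fin (r c),
      (∀ k : Fin r0, Q (Sum.inl k) (Sum.inr ⟨c, x⟩) = 0) ∧
      (∀ j : (c' : Fin C) × Fin (r c'), j.1 ≠ c → Q (Sum.inr j) (Sum.inr ⟨c, x⟩) = 0) := by
    intro m
    induction m with
    | zero => intro c hc; exfalso; have := c.isLt; omega
    | succ m IH =>
      intro c hc x
      have hsupp : ∀ c'' : Fin C, c < c'' → ∀ x'' : Fin (r c''),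
          (∀ k : Fin r0, Q (Sum.inl k) (Sum.inr ⟨c'', x''⟩) = 0) ∧
          (∀ j : (c' : Fin C) × Fin (r c'), j.1 ≠ c'' →
            Q (Sum.inr j) (Sum.inr ⟨c'', x''⟩) = 0) := by
        intro c'' hcc
        refine IH c'' ?_
        have h1 := c.isLt
        have h2 : c.val < c''.val := hcc
        omega
      have hA : ∀ j : (c' : Fin C) × Fin (r c'), c < j.1 →
          Q (Sum.inr j) (Sum.inr ⟨c, x⟩) = 0 := by
        rintro ⟨cj, y⟩ hcj
        refine aux_orth Q hQ cj (hsupp cj hcj) (Sum.inr ⟨c, x⟩) ?_ y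
        intro a hEqa
        have h2 : c = cj := (Sigma.mk.inj_iff.mp (Sum.inr.inj hEqa)).1
        exact absurd h2 (ne_of_lt hcj)
      set v : Fin r0 ⊕ {j : (c' : Fin C) × Fin (r c') // j.1 < c} → ℝ :=
        Sum.elim (fun k => Q (Sum.inl k) (Sum.inr ⟨c, x⟩))
          (fun j => Q (Sum.inr j.1) (Sum.inr ⟨c, x⟩)) with hvdef
      have hv : (Mmat n r r0 A B c).mulVec v = 0 := by
        funext i0
        obtain ⟨i, hi⟩ := i0
        obtain ⟨ci, ii⟩ := i
        have h1 := congrFun (congrFun hEq ⟨ci, ii⟩) (Sum.inr ⟨c, x⟩)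
        rw [Matrix.mul_apply] at h1
        have hR : Matrix.fromCols Atil (Matrix.blockDiagonal' Btil) ⟨ci, ii⟩
            (Sum.inr ⟨c, x⟩) = 0 := by
          rw [Matrix.fromCols_apply_inr]
          exact Matrix.blockDiagonal'_apply_ne Btil _ _ hi
        rw [hR, Fintype.sum_sum_type] at h1
        simp only [Matrix.fromCols_apply_inl, Matrix.fromCols_apply_inr] at h1
        show (∑ k, Mmat n r r0 A B c ⟨⟨ci, ii⟩, hi⟩ k * v k) = 0
        rw [Fintype.sum_sum_type]
        simp only [Mmat, Matrix.of_apply, Sum.elim_inl, Sum.elim_inr, hvdef]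
        have hsub : ∑ j : {j : (c' : Fin C) × Fin (r c') // j.1 < c},
            Matrix.blockDiagonal' B ⟨ci, ii⟩ j.1 * Q (Sum.inr j.1) (Sum.inr ⟨c, x⟩)
            = ∑ j : (c' : Fin C) × Fin (r c'),
              Matrix.blockDiagonal' B ⟨ci, ii⟩ j * Q (Sum.inr j) (Sum.inr ⟨c, x⟩) := by
          rw [← Finset.sum_subtype (Finset.univ.filter (fun j => j.1 < c)) (by simp)
            (fun j => Matrix.blockDiagonal' B ⟨ci, ii⟩ j * Q (Sum.inr j) (Sum.inr ⟨c, x⟩))]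
          refine Finset.sum_subset (Finset.filter_subset _ _) ?_
          intro j _ hj
          have hjc : ¬ j.1 < c := by
            intro h; exact hj (Finset.mem_filter.mpr ⟨Finset.mem_univ _, h⟩)
          obtain ⟨cj, y⟩ := j
          by_cases hcj : cj = ci
          · subst hcj
            have hlt : c < cj := lt_of_le_of_ne (not_lt.mp hjc) (Ne.symm hi)
            exact mul_eq_zero_of_right _ (hA ⟨cj, y⟩ hlt)
          · exact mul_eq_zero_of_left
              (Matrix.blockDiagonal'_apply_ne B _ _ (fun h => hcj h.symm)) _
        rw [hsub]
        exact h1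
      have hv0 : v = 0 := aux_fcr _ (hFCR c) hv
      refine ⟨fun k => congrFun hv0 (Sum.inl k), fun j hj => ?_⟩
      rcases lt_or_gt_of_ne hj with h | h
      · exact congrFun hv0 (Sum.inr ⟨j, h⟩)
      · exact hA j h
  have key' : ∀ c : Fin C, ∀ x : Fin (r c),
      (∀ k : Fin r0, Q (Sum.inl k) (Sum.inr ⟨c, x⟩) = 0) ∧
      (∀ j : (c' : Fin C) × Fin (r c'), j.1 ≠ c → Q (Sum.inr j) (Sum.inr ⟨c, x⟩) = 0) :=
    fun c => key C c (Nat.sub_le _ _)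
  refine ⟨fun k j => ⟨?_, ?_⟩, fun j j' hne => ?_⟩
  · obtain ⟨cj, y⟩ := j; exact (key' cj y).1 k
  · obtain ⟨cj, y⟩ := j
    exact aux_orth Q hQ cj (key' cj) (Sum.inl k) (fun a h => by simp at h) y
  · obtain ⟨c', y'⟩ := j'
    exact (key' c' y').2 j hne
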